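/- arXiv:2104.09561 — 2 statements merged into one kernel-verified Lean document; each statement's English description precedes it below -/
import Mathlib

section
/- Let Λ_t be the rank-3 lattice {x ∈ ℤ⁴ : x₀ + x₁ + x₂ + x₃ = 0}, with the alternating group A₄ ≤ S₄ acting by permuting the four coordinates. Then the second group cohomology H²(A₄, Λ_t) is the trivial group. -/
set_option maxRecDepth 8000

/-- The tetrahedral lattice `Λ_t = {x ∈ ℤ⁴ : x₀ + x₁ + x₂ + x₃ = 0}`,
the sum-zero sublattice of `ℤ⁴`. -/
def tetrahedralLattice : Submodule ℤ (Fin 4 → ℤ) where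
  carrier := {x | ∑ i, x i = 0}
  add_mem' := by
    intro a b ha hb
    simp only [Set.mem_setOf_eq, Pi.add_apply, Finset.sum_add_distrib] at *
    simp [ha, hb]
  zero_mem' := by simp
  smul_mem' := by
    intro c x hx
    simp only [Set.mem_setOf_eq, Pi.smul_apply, smul_eq_mul, ← Finset.mul_sum] at *
    simp [hx]

section General
variable {G : Type} [Group G] [DecidableEq G] {M : Type} [AddCommGroup M] [Module ℤ M]
  (ρ : Representation ℤ G M) (f : G × G → M) (ε : M →ₗ[ℤ] ℤ) (b : G → M)
  (K T : Finset G) (r : G → G)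

/-- The coinduced-module contraction `Ỹ`. -/
def coY (g₀ g₁ : G) : M := ∑ σ ∈ K, ε (f (σ * g₀, g₀⁻¹ * g₁)) • b σ

/-- The transfer 1-cochain. -/
def coX (g : G) : M := ∑ t ∈ T, ρ t (coY f ε b K t⁻¹ (t⁻¹ * g))

variable
  (hf : ∀ a c d : G, f (a * c, d) + f (a, c) = ρ a (f (c, d)) + f (a, c * d))
  (HB1 : ∀ τ ∈ K, ∀ σ ∈ K, ε (ρ τ (b σ)) = if τ = σ then 1 else 0)
  (HB2 : ∀ v : M, (∀ τ ∈ K, ε (ρ τ v) = 0) → v = 0)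
  (HB3 : ∀ h ∈ K, ∀ τ ∈ K, ρ h (b τ) = b (τ * h⁻¹))
  (Hmul : ∀ a ∈ K, ∀ c ∈ K, a * c ∈ K)
  (Hinv : ∀ a ∈ K, a⁻¹ ∈ K)
  (H5 : ∀ g : G, r g ∈ T ∧ (r g)⁻¹ * g ∈ K)
  (H6 : ∀ s : G, ∀ t ∈ T, r (s * r (s⁻¹ * t)) = t)

include HB1 in
lemma evalY : ∀ τ ∈ K, ∀ g₀ g₁ : G, ε (ρ τ (coY f ε b K g₀ g₁)) = ε (f (τ * g₀, g₀⁻¹ * g₁)) := by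
  intro τ hτ g₀ g₁
  rw [coY, map_sum, map_sum]
  have : ∀ σ ∈ K, ε (ρ τ (ε (f (σ * g₀, g₀⁻¹ * g₁)) • b σ))
      = if τ = σ then ε (f (σ * g₀, g₀⁻¹ * g₁)) else 0 := by
    intro σ hσ
    rw [map_zsmul, map_zsmul, smul_eq_mul, HB1 τ hτ σ hσ, mul_ite, mul_one,
      mul_zero]
  rw [Finset.sum_congr rfl this, Finset.sum_ite_eq K τ (fun σ => ε (f (σ * g₀, g₀⁻¹ * g₁))),
    if_pos hτ]

include hf HB1 HB2 in
lemma deltaY : ∀ g₀ g₁ g₂ : G,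
    coY f ε b K g₁ g₂ - coY f ε b K g₀ g₂ + coY f ε b K g₀ g₁
      = ρ g₀ (f (g₀⁻¹ * g₁, g₁⁻¹ * g₂)) := by
  intro g₀ g₁ g₂
  rw [← sub_eq_zero]
  apply HB2
  intro τ hτ
  simp only [map_sub, map_add]
  rw [evalY ρ f ε b K HB1 τ hτ, evalY ρ f ε b K HB1 τ hτ, evalY ρ f ε b K HB1 τ hτ]
  have key := congrArg ε (hf (τ * g₀) (g₀⁻¹ * g₁) (g₁⁻¹ * g₂))
  simp only [map_add] at key
  have h1 : τ * g₀ * (g₀⁻¹ * g₁) = τ * g₁ := by group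
  have h2 : g₀⁻¹ * g₁ * (g₁⁻¹ * g₂) = g₀⁻¹ * g₂ := by group
  rw [h1, h2] at key
  have h3 : ε ((ρ τ) ((ρ g₀) (f (g₀⁻¹ * g₁, g₁⁻¹ * g₂))))
      = ε ((ρ (τ * g₀)) (f (g₀⁻¹ * g₁, g₁⁻¹ * g₂))) := by
    rw [map_mul]; rfl
  rw [h3]
  linarith [key]

include HB3 Hmul Hinv in
lemma equivY : ∀ h ∈ K, ∀ g₀ g₁ : G,
    coY f ε b K (h * g₀) (h * g₁) = ρ h (coY f ε b K g₀ g₁) := by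
  intro h hh g₀ g₁
  rw [coY, coY, map_sum]
  have : ∀ σ ∈ K, ρ h (ε (f (σ * g₀, g₀⁻¹ * g₁)) • b σ)
      = ε (f (σ * g₀, g₀⁻¹ * g₁)) • b (σ * h⁻¹) := by
    intro σ hσ
    rw [map_zsmul, HB3 h hh σ hσ]
  rw [Finset.sum_congr rfl this]
  refine (Finset.sum_equiv (Equiv.mulRight h⁻¹) (fun τ => ?_) (fun τ hτ => ?_)).symm
  · constructor
    · intro hτ; exact Hmul τ hτ h⁻¹ (Hinv h hh)
    · intro hτ
      have := Hmul _ hτ h hh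
      simpa using this
  · have h1 : (h * g₀)⁻¹ * (h * g₁) = g₀⁻¹ * g₁ := by group
    have h2 : τ * h⁻¹ * (h * g₀) = τ * g₀ := by group
    simp only [Equiv.coe_mulRight, h1, h2]

include hf HB1 HB2 HB3 Hmul Hinv H5 H6 in
lemma transfer_main : ∀ g h : G,
    ρ g (coX ρ f ε b K T h) - coX ρ f ε b K T (g * h) + coX ρ f ε b K T g
      = (T.card : ℤ) • f (g, h) := by
  intro g h
  have step1 : ρ g (coX ρ f ε b K T h) = ∑ t ∈ T, ρ t (coY f ε b K (t⁻¹ * g) (t⁻¹ * (g * h))) := by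
    rw [coX, map_sum]
    refine (Finset.sum_nbij' (fun t => r (g⁻¹ * t)) (fun u => r (g * u)) ?_ ?_ ?_ ?_ ?_).symm
    · intro t _; exact (H5 _).1
    · intro u _; exact (H5 _).1
    · intro t ht; exact H6 g t ht
    · intro u hu; have := H6 g⁻¹ u hu; rwa [inv_inv] at this
    · intro t ht
      set t' := r (g⁻¹ * t) with ht'
      set k := t'⁻¹ * (g⁻¹ * t) with hk
      have hkK : k ∈ K := (H5 (g⁻¹ * t)).2
      have e1 : t⁻¹ * g = k⁻¹ * t'⁻¹ := by rw [hk]; group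
      have e2 : t⁻¹ * (g * h) = k⁻¹ * (t'⁻¹ * h) := by rw [hk]; group
      rw [e1, e2, equivY ρ f ε b K HB3 Hmul Hinv k⁻¹ (Hinv k hkK)]
      have e4 : t * k⁻¹ = g * t' := by rw [hk]; group
      rw [← Module.End.mul_apply, ← map_mul, e4, map_mul, Module.End.mul_apply]
  rw [step1, coX, coX, ← Finset.sum_sub_distrib, ← Finset.sum_add_distrib]
  have : ∀ t ∈ T, ρ t (coY f ε b K (t⁻¹ * g) (t⁻¹ * (g * h)))
        - ρ t (coY f ε b K t⁻¹ (t⁻¹ * (g * h))) + ρ t (coY f ε b K t⁻¹ (t⁻¹ * g))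
      = f (g, h) := by
    intro t _
    rw [← map_sub, ← map_add,
      deltaY ρ f ε b K hf HB1 HB2 t⁻¹ (t⁻¹ * g) (t⁻¹ * (g * h))]
    have h1 : t⁻¹⁻¹ * (t⁻¹ * g) = g := by group
    have h2 : (t⁻¹ * g)⁻¹ * (t⁻¹ * (g * h)) = h := by group
    rw [h1, h2, ← Module.End.mul_apply, ← map_mul, mul_inv_cancel, map_one, Module.End.one_apply]
  rw [Finset.sum_congr rfl this, Finset.sum_const, natCast_zsmul]
end General

instance decA4 : DecidablePred (· ∈ alternatingGroup (Fin 4)) :=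
  fun σ => decidable_of_iff (Equiv.Perm.sign σ = 1) (Equiv.Perm.mem_alternatingGroup).symm

abbrev G4 := alternatingGroup (Fin 4)
abbrev P4 := Equiv.Perm (Fin 4)

/-- the 3-cycle (0 1 2) -/
def cG : G4 := ⟨Equiv.swap 0 1 * Equiv.swap 1 2, by decide⟩

/-- even permutations sending 3 to j -/
def dd : Fin 4 → G4 :=
  ![⟨Equiv.swap 0 3 * Equiv.swap 1 2, by decide⟩,
    ⟨Equiv.swap 1 3 * Equiv.swap 0 2, by decide⟩,
    ⟨Equiv.swap 2 3 * Equiv.swap 0 1, by decide⟩, 1]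

def K3 : Finset G4 := Finset.univ.filter fun σ => (σ : P4) 3 = 3
def T3 : Finset G4 := Finset.univ.image dd
def r3 : G4 → G4 := fun g => dd ((g : P4) 3)

def K4 : Finset G4 := Finset.univ.filter fun σ => σ * σ = 1
def T4 : Finset G4 := {1, cG, cG * cG}
def r4 : G4 → G4 := fun g =>
  if g * g = 1 then 1 else if (cG⁻¹ * g) * (cG⁻¹ * g) = 1 then cG else cG * cG

/-- basis vector function for the C₃ case -/
def bfun (j : Fin 4) : Fin 4 → ℤ := fun i => (if i = j then 1 else 0) - (if i = 3 then 1 else 0)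

def b3 : G4 → tetrahedralLattice := fun σ =>
  ⟨bfun ((σ : P4)⁻¹ 0), by
    have h : ∀ j : Fin 4, ∑ i, bfun j i = 0 := by decide
    exact h _⟩

def eps3 : tetrahedralLattice →ₗ[ℤ] ℤ where
  toFun v := v.1 0
  map_add' _ _ := rfl
  map_smul' _ _ := rfl

def permRep : Representation ℤ G4 (Fin 4 → ℤ) where
  toFun σ :=
    { toFun := fun v i => v ((σ : P4)⁻¹ i)
      map_add' := fun _ _ => rfl
      map_smul' := fun _ _ => rfl }
  map_one' := LinearMap.ext fun v => funext fun i => rfl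
  map_mul' := fun σ τ => LinearMap.ext fun v => funext fun i => by
    show v ((σ * τ : P4)⁻¹ i) = v ((τ : P4)⁻¹ ((σ : P4)⁻¹ i))
    rw [mul_inv_rev]
    rfl

def b4 : G4 → (Fin 4 → ℤ) := fun σ i => if i = (σ : P4)⁻¹ 0 then 1 else 0

def eps4 : (Fin 4 → ℤ) →ₗ[ℤ] ℤ := LinearMap.proj 0

lemma memLambda (w : Fin 4 → ℤ) (h : ∑ i, w i = 0) : w ∈ tetrahedralLattice := h

lemma sumLambda (v : tetrahedralLattice) : ∑ i, (v : Fin 4 → ℤ) i = 0 := v.2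

/-- For the action of the alternating group `A₄` on the tetrahedral
lattice `Λ_t` by permutation of the four coordinates, `H²(A₄, Λ_t) = 0`. -/
theorem stmt0
    (ρ : Representation ℤ (alternatingGroup (Fin 4)) tetrahedralLattice)
    (hρ : ∀ (σ : alternatingGroup (Fin 4)) (v : tetrahedralLattice) (i : Fin 4),
      ((ρ σ v : Fin 4 → ℤ) i) = (v : Fin 4 → ℤ) ((σ : Equiv.Perm (Fin 4))⁻¹ i)) :
    Subsingleton (groupCohomology (Rep.of ρ) 2) := by
  classical
  have coe_ρ : ∀ (σ : G4) (w : tetrahedralLattice),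
      ((ρ σ w : tetrahedralLattice) : Fin 4 → ℤ) = permRep σ (w : Fin 4 → ℤ) :=
    fun σ w => funext fun i => by rw [hρ]; rfl
  -- hypotheses for the C₃ = stabilizer-of-3 instance (index 4)
  have HB1₃ : ∀ τ ∈ K3, ∀ σ ∈ K3, eps3 (ρ τ (b3 σ)) = if τ = σ then 1 else 0 := by
    have key : ∀ τ ∈ K3, ∀ σ ∈ K3,
        bfun ((σ : P4)⁻¹ 0) ((τ : P4)⁻¹ 0) = if τ = σ then (1:ℤ) else 0 := by decide
    intro τ hτ σ hσ
    exact (hρ τ (b3 σ) 0).trans (key τ hτ σ hσ)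
  have HB2₃ : ∀ v : tetrahedralLattice, (∀ τ ∈ K3, eps3 (ρ τ v) = 0) → v = 0 := by
    intro v hv
    have mem1 : (1 : G4) ∈ K3 := by decide
    have memc : cG ∈ K3 := by decide
    have memc2 : cG * cG ∈ K3 := by decide
    have e0 : (v : Fin 4 → ℤ) 0 = 0 := by
      have h := (hρ 1 v 0).symm.trans (hv 1 mem1)
      rwa [show ((1 : G4) : P4)⁻¹ 0 = 0 by decide] at h
    have e2 : (v : Fin 4 → ℤ) 2 = 0 := by
      have h := (hρ cG v 0).symm.trans (hv cG memc)
      rwa [show ((cG : G4) : P4)⁻¹ 0 = 2 by decide] at h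
    have e1 : (v : Fin 4 → ℤ) 1 = 0 := by
      have h := (hρ (cG * cG) v 0).symm.trans (hv (cG * cG) memc2)
      rwa [show ((cG * cG : G4) : P4)⁻¹ 0 = 1 by decide] at h
    have hsum := sumLambda v
    rw [Fin.sum_univ_four] at hsum
    apply Subtype.ext
    funext i
    fin_cases i
    · exact e0
    · exact e1
    · exact e2
    · show (v : Fin 4 → ℤ) 3 = 0; omega
  have HB3₃ : ∀ h ∈ K3, ∀ τ ∈ K3, ρ h (b3 τ) = b3 (τ * h⁻¹) := by
    have key : ∀ h ∈ K3, ∀ τ ∈ K3, ∀ i : Fin 4,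
        bfun ((τ : P4)⁻¹ 0) ((h : P4)⁻¹ i) = bfun (((τ * h⁻¹ : G4) : P4)⁻¹ 0) i := by decide
    intro h hh τ hτ
    apply Subtype.ext
    funext i
    exact (hρ h (b3 τ) i).trans (key h hh τ hτ i)
  have Hmul₃ : ∀ a ∈ K3, ∀ c ∈ K3, a * c ∈ K3 := by decide
  have Hinv₃ : ∀ a ∈ K3, a⁻¹ ∈ K3 := by decide
  have H5₃ : ∀ g : G4, r3 g ∈ T3 ∧ (r3 g)⁻¹ * g ∈ K3 := by decide
  have H6₃ : ∀ s : G4, ∀ t ∈ T3, r3 (s * r3 (s⁻¹ * t)) = t := by decide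
  -- hypotheses for the V₄ instance (index 3), on the ambient module ℤ⁴
  have HB1₄ : ∀ τ ∈ K4, ∀ σ ∈ K4, eps4 (permRep τ (b4 σ)) = if τ = σ then 1 else 0 := by
    have key : ∀ τ ∈ K4, ∀ σ ∈ K4, b4 σ ((τ : P4)⁻¹ 0) = if τ = σ then (1:ℤ) else 0 := by decide
    intro τ hτ σ hσ
    exact key τ hτ σ hσ
  have HB2₄ : ∀ v : Fin 4 → ℤ, (∀ τ ∈ K4, eps4 (permRep τ v) = 0) → v = 0 := by
    have cover : ∀ i : Fin 4, ∃ τ, τ ∈ K4 ∧ (τ : P4)⁻¹ 0 = i := by decide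
    intro v hv
    funext i
    obtain ⟨τ, hτ, hi⟩ := cover i
    have := hv τ hτ
    rwa [show eps4 (permRep τ v) = v ((τ : P4)⁻¹ 0) from rfl, hi] at this
  have HB3₄ : ∀ h ∈ K4, ∀ τ ∈ K4, permRep h (b4 τ) = b4 (τ * h⁻¹) := by
    have key : ∀ h ∈ K4, ∀ τ ∈ K4, ∀ i : Fin 4,
        b4 τ ((h : P4)⁻¹ i) = b4 (τ * h⁻¹) i := by decide
    intro h hh τ hτ
    funext i
    exact key h hh τ hτ i
  have Hmul₄ : ∀ a ∈ K4, ∀ c ∈ K4, a * c ∈ K4 := by decide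
  have Hinv₄ : ∀ a ∈ K4, a⁻¹ ∈ K4 := by decide
  have H5₄ : ∀ g : G4, r4 g ∈ T4 ∧ (r4 g)⁻¹ * g ∈ K4 := by decide
  have H6₄ : ∀ s : G4, ∀ t ∈ T4, r4 (s * r4 (s⁻¹ * t)) = t := by decide
  -- every 2-cocycle is a coboundary
  have key : ∀ F : groupCohomology.cocycles₂ (Rep.of ρ),
      (F : G4 × G4 → tetrahedralLattice) ∈ groupCohomology.coboundaries₂ (Rep.of ρ) := by
    intro F
    suffices hs : ∃ x : G4 → tetrahedralLattice,
        ∀ g h : G4, ρ g (x h) - x (g * h) + x g = F.1 (g, h) by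
      obtain ⟨x, hx⟩ := hs
      exact ⟨x, funext fun p => hx p.1 p.2⟩
    set f : G4 × G4 → tetrahedralLattice := fun p => F.1 p with hfdef
    have hf : ∀ a c d : G4, f (a * c, d) + f (a, c)
        = ρ a (f (c, d)) + f (a, c * d) :=
      fun a c d => (groupCohomology.mem_cocycles₂_iff F.1).1 F.2 a c d
    -- index-4 subgroup gives x₄ with d x₄ = 4 f
    set x4 : G4 → tetrahedralLattice := coX ρ f eps3 b3 K3 T3 with hx4def
    have hx4 : ∀ g h : G4, ρ g (x4 h) - x4 (g * h) + x4 g = (4 : ℤ) • f (g, h) := by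
      have := transfer_main ρ f eps3 b3 K3 T3 r3 hf HB1₃ HB2₃ HB3₃ Hmul₃ Hinv₃ H5₃ H6₃
      rwa [show (T3.card : ℤ) = 4 by decide] at this
    -- index-3 subgroup: work in ℤ⁴
    set f' : G4 × G4 → (Fin 4 → ℤ) := fun p => (f p : Fin 4 → ℤ) with hf'def
    have hf' : ∀ a c d : G4, f' (a * c, d) + f' (a, c)
        = permRep a (f' (c, d)) + f' (a, c * d) := by
      intro a c d
      have h := congrArg (Subtype.val) (hf a c d)
      simpa only [Submodule.coe_add, coe_ρ] using h
    set x' : G4 → (Fin 4 → ℤ) := coX permRep f' eps4 b4 K4 T4 with hx'def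
    have hx' : ∀ g h : G4, permRep g (x' h) - x' (g * h) + x' g = (3 : ℤ) • f' (g, h) := by
      have := transfer_main permRep f' eps4 b4 K4 T4 r4 hf' HB1₄ HB2₄ HB3₄ Hmul₄ Hinv₄ H5₄ H6₄
      rwa [show (T4.card : ℤ) = 3 by decide] at this
    -- x' automatically lands in the lattice
    set q : G4 → ℤ := fun g => ∑ i, x' g i with hqdef
    have sum_perm : ∀ (σ : G4) (v : Fin 4 → ℤ), ∑ i, permRep σ v i = ∑ i, v i := by
      intro σ v
      exact Equiv.sum_comp ((σ : P4)⁻¹) v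
    have hq : ∀ g h : G4, q (g * h) = q g + q h := by
      intro g h
      have h1 := congrArg (fun w => ∑ i, w i) (hx' g h)
      simp only [Pi.add_apply, Pi.sub_apply, Pi.smul_apply, smul_eq_mul,
        Finset.sum_add_distrib, Finset.sum_sub_distrib, ← Finset.mul_sum] at h1
      rw [sum_perm] at h1
      have h2 : ∑ i, f' (g, h) i = 0 := sumLambda (f (g, h))
      rw [h2, mul_zero] at h1
      have : q h - q (g * h) + q g = 0 := h1
      omega
    have q1 : q 1 = 0 := by
      have := hq 1 1
      rw [one_mul] at this
      omega
    have qpow : ∀ (n : ℕ) (g : G4), q (g ^ n) = n * q g := by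
      intro n g
      induction n with
      | zero => simpa using q1
      | succ n ih => rw [pow_succ, hq, ih]; push_cast; ring
    have qz : ∀ g : G4, q g = 0 := by
      intro g
      have hc : g ^ (Fintype.card G4) = 1 := pow_card_eq_one
      have h1 := qpow (Fintype.card G4) g
      rw [hc, q1] at h1
      have hcard : (Fintype.card G4 : ℤ) ≠ 0 := by
        exact_mod_cast Fintype.card_ne_zero
      exact (mul_eq_zero.1 h1.symm).resolve_left hcard
    set x3 : G4 → tetrahedralLattice := fun g => ⟨x' g, memLambda _ (qz g)⟩ with hx3def
    have hx3 : ∀ g h : G4, ρ g (x3 h) - x3 (g * h) + x3 g = (3 : ℤ) • f (g, h) := by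
      intro g h
      apply Subtype.ext
      show ((ρ g (x3 h) - x3 (g * h) + x3 g : tetrahedralLattice) : Fin 4 → ℤ)
        = (((3 : ℤ) • f (g, h) : tetrahedralLattice) : Fin 4 → ℤ)
      simp only [Submodule.coe_add, AddSubgroupClass.coe_sub, SetLike.val_smul, coe_ρ]
      exact hx' g h
    -- combine
    refine ⟨fun g => x4 g - x3 g, fun g h => ?_⟩
    show ρ g (x4 h - x3 h) - (x4 (g * h) - x3 (g * h)) + (x4 g - x3 g) = f (g, h)
    have comb : ρ g (x4 h - x3 h) - (x4 (g * h) - x3 (g * h)) + (x4 g - x3 g)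
        = (ρ g (x4 h) - x4 (g * h) + x4 g) - (ρ g (x3 h) - x3 (g * h) + x3 g) := by
      rw [map_sub]; abel
    rw [comb, hx4 g h, hx3 g h, ← sub_smul]
    norm_num
  have hz : ∀ x : groupCohomology (Rep.of ρ) 2, x = 0 := fun x =>
    groupCohomology.H2_induction_on x fun y => (groupCohomology.H2π_eq_zero_iff y).2 (key y)
  exact ⟨fun a b => by rw [hz a, hz b]⟩
end

section
/- Let pg = ℤ ⋊ ℤ be the Klein bottle group, the semidirect product with multiplication (x, y)·(x′, y′) = (x + (−1)^y x′, y + y′), and let ℤ_o be the pg-module with underlying group ℤ on which (x, y) ∈ pg acts by multiplication by (−1)^y. Then the second group cohomology H²(pg, ℤ_o) is isomorphic to ℤ. -/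
/-- The Klein bottle (wallpaper) group `pg = ℤ ⋊ ℤ`, with multiplication
`(x, y)·(x′, y′) = (x + (−1)^y x′, y + y′)`: the generator of the acting `ℤ`
factor acts on the normal `ℤ` factor by negation. -/
abbrev pgGroup :=
  Multiplicative ℤ ⋊[zpowersHom (MulAut (Multiplicative ℤ)) (MulEquiv.inv (Multiplicative ℤ))]
    Multiplicative ℤ

/-- The orientation module `ℤ_o`: the `pg`-module with underlying group `ℤ` on which
`(x, y)` acts by multiplication by `(−1)^y`. -/
noncomputable def zo : Representation ℤ pgGroup ℤ :=
  (Units.coeHom (Module.End ℤ ℤ)).comp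
    ((zpowersHom (Module.End ℤ ℤ)ˣ (-1)).comp SemidirectProduct.rightHom)


open SemidirectProduct Multiplicative

lemma negOnePow_sq (k : ℤ) : ((k.negOnePow : ℤ)) * ((k.negOnePow : ℤ)) = 1 := by
  rw [← Units.val_mul, Int.units_mul_self, Units.val_one]

lemma inv_zpow_apply (k : ℤ) (x : Multiplicative ℤ) :
    ((MulEquiv.inv (Multiplicative ℤ)) ^ k) x = x ^ ((k.negOnePow : ℤ)) := by
  have h2 : (MulEquiv.inv (Multiplicative ℤ)) ^ (2:ℤ) = 1 := by
    ext a; rw [zpow_two]; simp [MulAut.mul_apply]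
  rcases Int.even_or_odd k with ⟨m, hm⟩ | ⟨m, hm⟩
  · subst hm
    rw [Int.negOnePow_even _ ⟨m, rfl⟩, ← two_mul, zpow_mul, h2]
    simp
  · subst hm
    rw [Int.negOnePow_odd _ ⟨m, rfl⟩, zpow_add, zpow_mul, h2]
    simp

noncomputable def X (g : pgGroup) : ℤ := toAdd g.left
noncomputable def Y (g : pgGroup) : ℤ := toAdd g.right
noncomputable def E (g : pgGroup) : ℤ := ((Y g).negOnePow : ℤ)

noncomputable def el (x y : ℤ) : pgGroup := ⟨ofAdd x, ofAdd y⟩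

lemma pg_ext {g h : pgGroup} (h1 : X g = X h) (h2 : Y g = Y h) : g = h := by
  ext
  · exact toAdd.injective h1
  · exact toAdd.injective h2

@[simp] lemma X_el (x y : ℤ) : X (el x y) = x := rfl
@[simp] lemma Y_el (x y : ℤ) : Y (el x y) = y := rfl
@[simp] lemma Y_mul (g h : pgGroup) : Y (g * h) = Y g + Y h := rfl
@[simp] lemma Y_one : Y 1 = 0 := rfl
@[simp] lemma X_one : X 1 = 0 := rfl

@[simp] lemma X_mul (g h : pgGroup) : X (g * h) = X g + ((Y g).negOnePow : ℤ) * X h := by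
  show toAdd (g.left * (zpowersHom (MulAut (Multiplicative ℤ)) (MulEquiv.inv (Multiplicative ℤ)) g.right) h.left) = _
  rw [zpowersHom_apply, inv_zpow_apply]
  simp [X, Y, mul_comm]

@[simp] lemma Y_inv (g : pgGroup) : Y g⁻¹ = - Y g := by
  have h := Y_mul g⁻¹ g
  rw [inv_mul_cancel, Y_one] at h
  linarith

@[simp] lemma X_inv (g : pgGroup) : X g⁻¹ = - ((Y g).negOnePow : ℤ) * X g := by
  have h := X_mul g g⁻¹
  rw [mul_inv_cancel, X_one] at h
  have h2 := negOnePow_sq (Y g)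
  have h3 : X g⁻¹ = (((Y g).negOnePow : ℤ) * ((Y g).negOnePow : ℤ)) * X g⁻¹ := by
    rw [h2, one_mul]
  rw [h3, mul_assoc]
  have h4 : ((Y g).negOnePow : ℤ) * X g⁻¹ = - X g := by linarith
  rw [h4]; ring

lemma el_mul (x y x' y' : ℤ) : el x y * el x' y' = el (x + (y.negOnePow : ℤ) * x') (y + y') := by
  apply pg_ext <;> simp

lemma eq_el (g : pgGroup) : g = el (X g) (Y g) := rfl

@[simp] lemma E_mul (g h : pgGroup) : E (g * h) = E g * E h := by
  simp only [E, Y_mul, Int.negOnePow_add]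
  rw [Units.val_mul]
@[simp] lemma E_one : E 1 = 1 := rfl

lemma zo_apply (g : pgGroup) (n : ℤ) : zo g n = E g * n := by
  show (((-1 : (Module.End ℤ ℤ)ˣ) ^ (toAdd g.right) : (Module.End ℤ ℤ)ˣ) : Module.End ℤ ℤ) n = _
  have h2 : (-1 : (Module.End ℤ ℤ)ˣ) ^ (2:ℤ) = 1 := by
    rw [zpow_two]; simp
  rcases Int.even_or_odd (toAdd g.right) with ⟨m, hm⟩ | ⟨m, hm⟩
  · rw [E, Y, hm, Int.negOnePow_even _ ⟨m, rfl⟩, ← two_mul, zpow_mul, h2]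
    simp
  · rw [E, Y, hm, Int.negOnePow_odd _ ⟨m, rfl⟩, zpow_add, zpow_mul, h2]
    simp

noncomputable def pa : pgGroup := el 1 0
noncomputable def pb : pgGroup := el 0 1

open groupCohomology

/-- The Euler-class functional on 2-cochains. -/
noncomputable def Phi : ((pgGroup × pgGroup) → ℤ) →ₗ[ℤ] ℤ where
  toFun f := f (pb, pa) + f (pb⁻¹, pb) + f (pb * pa, pb⁻¹) + f (pa⁻¹, pa) + 2 * f (1, 1)
  map_add' x y := by simp; ring
  map_smul' r x := by simp; ring

lemma rep_apply (g : pgGroup) (n : ℤ) : ((Rep.of zo).ρ g) n = E g * n := zo_apply g n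

lemma phi_dOne (η : pgGroup → ℤ) : Phi ((d₁₂ (Rep.of zo)).hom η) = 0 := by
  have hb : pb * pa * pb⁻¹ = pa⁻¹ := by
    apply pg_ext <;> simp [pa, pb]
  simp only [Phi, d₁₂_hom_apply, LinearMap.coe_mk, AddHom.coe_mk]
  simp only [rep_apply, zo_apply]
  rw [inv_mul_cancel, inv_mul_cancel, hb, one_mul]
  have e1 : E pb = -1 := by simp [E, pb]
  have e2 : E pb⁻¹ = -1 := by
    have : (E pb⁻¹) * E pb = 1 := by rw [← E_mul, inv_mul_cancel, E_one]
    rw [e1] at this; linarith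
  have e3 : E (pb * pa) = -1 := by rw [E_mul, e1]; simp [E, pa]
  have e4 : E pa⁻¹ = 1 := by
    have : (E pa⁻¹) * E pa = 1 := by rw [← E_mul, inv_mul_cancel, E_one]
    have h5 : E pa = 1 := by simp [E, pa]
    rw [h5] at this; linarith
  rw [e1, e2, e3, e4, E_one]
  ring

/-- The generating 2-cocycle. -/
noncomputable def f0 : pgGroup × pgGroup → ℤ := fun p => - ((Y p.1).negOnePow : ℤ) * Y p.1 * X p.2

lemma f0_cocycle : f0 ∈ cocycles₂ (Rep.of zo) := by
  rw [mem_cocycles₂_def]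
  intro g h j
  simp only [rep_apply, zo_apply, f0, Y_mul, X_mul, E, Int.negOnePow_add, Units.val_mul]
  set u := ((Y g).negOnePow : ℤ)
  set v := ((Y h).negOnePow : ℤ)
  have h5 : ∀ (u v yh xj yg xh : ℤ), u * (-v * yh * xj) - -(u * v) * (yg + yh) * xj + -u * yg * (xh + v * xj) - -u * yg * xh = 0 := by
    intros; ring
  exact h5 u v (Y h) (X j) (Y g) (X h)

lemma phi_f0 : Phi f0 = 1 := by
  have h1 : pb⁻¹ = el 0 (-1) := by apply pg_ext <;> simp [pb]
  have h2 : pa⁻¹ = el (-1) 0 := by apply pg_ext <;> simp [pa]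
  have h3 : pb * pa = el (-1) 1 := by apply pg_ext <;> simp [pa, pb]
  have h4 : (1 : pgGroup) = el 0 0 := rfl
  simp only [Phi, LinearMap.coe_mk, AddHom.coe_mk, h1, h2, h3, h4, f0, pa, pb, X_el, Y_el]
  norm_num [Int.negOnePow_one]

@[simp] lemma E_inv (g : pgGroup) : E g⁻¹ = E g := by
  simp [E, Int.negOnePow_neg]

@[simp] lemma E_pa : E pa = 1 := by simp [E, pa]
@[simp] lemma E_pb : E pb = -1 := by simp [E, pb]

/-- Normalized cocycle predicate. -/
def IsNC (f : pgGroup × pgGroup → ℤ) : Prop :=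
  (∀ g h j : pgGroup, E g * f (h, j) - f (g * h, j) + f (g, h * j) - f (g, h) = 0) ∧
  (∀ g : pgGroup, f (1, g) = 0) ∧ (∀ g : pgGroup, f (g, 1) = 0)

/-- The extension of `pg` by `ℤ_o` determined by a normalized cocycle. -/
@[ext]
structure ExtC (F : {f : pgGroup × pgGroup → ℤ // IsNC f}) where
  z : ℤ
  g : pgGroup

variable {F : {f : pgGroup × pgGroup → ℤ // IsNC f}}

noncomputable instance : Group (ExtC F) where
  mul p q := ⟨p.z + E p.g * q.z + F.1 (p.g, q.g), p.g * q.g⟩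
  one := ⟨0, 1⟩
  inv p := ⟨- E p.g⁻¹ * p.z - F.1 (p.g⁻¹, p.g), p.g⁻¹⟩
  mul_assoc p q r := by
    have hc := F.2.1 p.g q.g r.g
    refine ExtC.ext ?_ ?_
    · show p.z + E p.g * q.z + F.1 (p.g, q.g) + E (p.g * q.g) * r.z + F.1 (p.g * q.g, r.g) =
        p.z + E p.g * (q.z + E q.g * r.z + F.1 (q.g, r.g)) + F.1 (p.g, q.g * r.g)
      rw [E_mul]
      linear_combination -hc
    · show p.g * q.g * r.g = p.g * (q.g * r.g)
      exact mul_assoc _ _ _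
  one_mul p := by
    refine ExtC.ext ?_ ?_
    · show 0 + E 1 * p.z + F.1 (1, p.g) = p.z
      rw [E_one, F.2.2.1]; ring
    · show 1 * p.g = p.g
      exact one_mul _
  mul_one p := by
    refine ExtC.ext ?_ ?_
    · show p.z + E p.g * 0 + F.1 (p.g, 1) = p.z
      rw [F.2.2.2]; ring
    · show p.g * 1 = p.g
      exact mul_one _
  inv_mul_cancel p := by
    refine ExtC.ext ?_ ?_
    · show - E p.g⁻¹ * p.z - F.1 (p.g⁻¹, p.g) + E p.g⁻¹ * p.z + F.1 (p.g⁻¹, p.g) = 0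
      ring
    · exact inv_mul_cancel _

@[simp] lemma ExtC.mul_z (p q : ExtC F) : (p * q).z = p.z + E p.g * q.z + F.1 (p.g, q.g) := rfl
@[simp] lemma ExtC.mul_g (p q : ExtC F) : (p * q).g = p.g * q.g := rfl
@[simp] lemma ExtC.one_z : (1 : ExtC F).z = 0 := rfl
@[simp] lemma ExtC.one_g : (1 : ExtC F).g = 1 := rfl
@[simp] lemma ExtC.inv_z (p : ExtC F) : (p⁻¹).z = - E p.g⁻¹ * p.z - F.1 (p.g⁻¹, p.g) := rfl
@[simp] lemma ExtC.inv_g (p : ExtC F) : (p⁻¹).g = p.g⁻¹ := rfl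

lemma exists_eta (hphi : F.1 (pb, pa) + F.1 (pb⁻¹, pb) + F.1 (pb * pa, pb⁻¹) + F.1 (pa⁻¹, pa) = 0) :
    ∃ η : pgGroup → ℤ, ∀ g h : pgGroup, E g * η h - η (g * h) + η g = F.1 (g, h) := by
  set A : ExtC F := ⟨0, pa⟩ with hA
  set B : ExtC F := ⟨0, pb⟩ with hB
  have hpbpa : pb * pa * pb⁻¹ = pa⁻¹ := by
    apply pg_ext <;> simp [pa, pb]
  have hBA : B * A * B⁻¹ = A⁻¹ := by
    refine ExtC.ext ?_ ?_
    · show (0 + E pb * 0 + F.1 (pb, pa)) + E (pb * pa) * (- E pb⁻¹ * 0 - F.1 (pb⁻¹, pb)) +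
        F.1 (pb * pa, pb⁻¹) = - E pa⁻¹ * 0 - F.1 (pa⁻¹, pa)
      rw [E_mul]
      simp only [E_pa, E_pb]
      linarith [hphi]
    · show pb * pa * pb⁻¹ = pa⁻¹
      exact hpbpa
  have hBA' : B * A = A⁻¹ * B := by
    rw [← hBA]; group
  have hBA'' : B⁻¹ * A = A⁻¹ * B⁻¹ := by
    have h := congrArg (fun t => t⁻¹) hBA'
    simp only [mul_inv_rev, inv_inv] at h
    exact h.symm
  have hcomm : ∀ k : ℤ, B ^ k * A = A ^ ((k.negOnePow : ℤ)) * B ^ k := by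
    intro k
    induction k using Int.induction_on with
    | zero => simp
    | succ k ih =>
      have h1 : B ^ ((k : ℤ) + 1) = B ^ (k : ℤ) * B := zpow_add_one B k
      have ih' : B ^ (k : ℤ) * A⁻¹ = (A ^ (((k:ℤ).negOnePow : ℤ)))⁻¹ * B ^ (k : ℤ) := by
        rw [eq_inv_mul_iff_mul_eq, ← mul_assoc, ← ih, mul_assoc, mul_inv_cancel, mul_one]
      rw [h1, mul_assoc, hBA', ← mul_assoc, ih', Int.negOnePow_succ]
      push_cast
      group
    | pred k ih =>
      have h1 : B ^ (-(k : ℤ) - 1) = B ^ (-(k : ℤ)) * B⁻¹ := by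
        rw [← zpow_neg_one, ← zpow_add]; ring_nf
      have ih' : B ^ (-(k : ℤ)) * A⁻¹ = (A ^ (((-(k:ℤ)).negOnePow : ℤ)))⁻¹ * B ^ (-(k : ℤ)) := by
        rw [eq_inv_mul_iff_mul_eq, ← mul_assoc, ← ih, mul_assoc, mul_inv_cancel, mul_one]
      rw [h1, mul_assoc, hBA'', ← mul_assoc, ih']
      have h2 : ((-(k:ℤ) - 1).negOnePow : ℤ) = -((-(k:ℤ)).negOnePow : ℤ) := by
        rw [Int.negOnePow_sub]
        simp [Int.negOnePow_one]
      rw [h2, mul_assoc]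
      group
  -- the lift
  set φ : Multiplicative ℤ →* ExtC F := zpowersHom (ExtC F) A with hφ
  set ψ : Multiplicative ℤ →* ExtC F := zpowersHom (ExtC F) B with hψ
  have hlift : ∀ r : Multiplicative ℤ,
      φ.comp ((zpowersHom (MulAut (Multiplicative ℤ)) (MulEquiv.inv (Multiplicative ℤ)) r)).toMonoidHom
        = (MulAut.conj (ψ r)).toMonoidHom.comp φ := by
    intro r
    apply MonoidHom.ext_mint
    simp only [MonoidHom.comp_apply, MulEquiv.coe_toMonoidHom, MulAut.conj_apply]
    show A ^ (Multiplicative.toAdd ((zpowersHom (MulAut (Multiplicative ℤ)) (MulEquiv.inv (Multiplicative ℤ)) r) (Multiplicative.ofAdd 1))) = ψ r * φ (Multiplicative.ofAdd 1) * (ψ r)⁻¹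
    rw [zpowersHom_apply, inv_zpow_apply, toAdd_zpow]
    have h3 : φ (Multiplicative.ofAdd 1) = A := by
      rw [hφ, zpowersHom_apply]
      simp
    have h4 : ψ r = B ^ (Multiplicative.toAdd r) := by
      rw [hψ, zpowersHom_apply]
    rw [h3, h4]
    have h5 : ((Multiplicative.toAdd r).negOnePow : ℤ) • Multiplicative.toAdd (Multiplicative.ofAdd (1:ℤ)) = ((Multiplicative.toAdd r).negOnePow : ℤ) := by simp
    rw [h5, hcomm, mul_assoc]
    simp
  set s : pgGroup →* ExtC F := SemidirectProduct.lift φ ψ hlift with hs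
  set P : ExtC F →* pgGroup :=
    { toFun := fun p => p.g, map_one' := rfl, map_mul' := fun p q => rfl } with hP
  have hPs : P.comp s = MonoidHom.id pgGroup := by
    apply SemidirectProduct.hom_ext
    · apply MonoidHom.ext_mint
      simp only [MonoidHom.comp_apply, MonoidHom.id_apply, hs, SemidirectProduct.lift_inl]
      have h3 : φ (Multiplicative.ofAdd 1) = A := by
        rw [hφ, zpowersHom_apply]; simp
      rw [h3]
      rfl
    · apply MonoidHom.ext_mint
      simp only [MonoidHom.comp_apply, MonoidHom.id_apply, hs, SemidirectProduct.lift_inr]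
      have h4 : ψ (Multiplicative.ofAdd 1) = B := by
        rw [hψ, zpowersHom_apply]; simp
      rw [h4]
      rfl
  have hproj : ∀ g : pgGroup, (s g).g = g := fun g => DFunLike.congr_fun hPs g
  refine ⟨fun g => -(s g).z, ?_⟩
  intro g h
  have hz := congrArg ExtC.z (map_mul s g h)
  simp only [ExtC.mul_z, hproj] at hz
  dsimp only
  linear_combination hz

open groupCohomology

noncomputable def Phi' : cocycles₂ (Rep.of zo) →ₗ[ℤ] ℤ :=
  Phi ∘ₗ (cocycles₂ (Rep.of zo)).subtype

noncomputable abbrev twoCoboundaries' : Submodule ℤ (cocycles₂ (Rep.of zo)) :=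
  (coboundaries₂ (Rep.of zo)).comap (cocycles₂ (Rep.of zo)).subtype

lemma phi'_surjective : Function.Surjective Phi' := by
  intro n
  refine ⟨n • (⟨f0, f0_cocycle⟩ : cocycles₂ (Rep.of zo)), ?_⟩
  have : Phi' (⟨f0, f0_cocycle⟩ : cocycles₂ (Rep.of zo)) = 1 := phi_f0
  rw [map_smul, this, smul_eq_mul, mul_one]

lemma ker_phi' : LinearMap.ker Phi' = twoCoboundaries' := by
  apply le_antisymm
  · intro Fc hFc
    have hP0 : Phi' Fc = 0 := hFc
    set FF : pgGroup × pgGroup → ℤ := fun p => Fc.1 p with hFFdef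
    have hPhiF : Phi FF = 0 := hP0
    have hcF : ∀ g h j : pgGroup,
        E g * FF (h, j) - FF (g * h, j) + FF (g, h * j) - FF (g, h) = 0 := by
      intro g h j
      have h0 := (mem_cocycles₂_def ((cocycles₂ (Rep.of zo)).subtype Fc)).mp Fc.2 g h j
      rw [rep_apply] at h0
      exact h0
    have hone1 : ∀ g : pgGroup, FF (1, g) = FF (1, 1) := fun g => cocycles₂_map_one_fst Fc g
    have hone2 : ∀ g : pgGroup, FF (g, 1) = E g * FF (1, 1) := by
      intro g
      have h2 := cocycles₂_map_one_snd Fc g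
      rw [rep_apply] at h2
      exact h2
    set c : ℤ := FF (1, 1) with hc
    set f' : pgGroup × pgGroup → ℤ := fun p => FF p - E p.1 * c with hf'
    set g2 : pgGroup × pgGroup → ℤ := fun p => E p.1 * c with hg2def
    have hg2 : g2 = (d₁₂ (Rep.of zo)).hom (fun _ => c) := by
      funext p
      simp only [hg2def, d₁₂_hom_apply, rep_apply, zo_apply]
      have hz : (E p.1 * c : ℤ) = E p.1 * c - c + c := by ring
      exact hz
    have hsplit : f' = FF - g2 := rfl
    have hPf' : Phi f' = 0 := by
      rw [hsplit, map_sub, hPhiF, hg2, phi_dOne]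
      ring
    have hNC : IsNC f' := by
      refine ⟨?_, ?_, ?_⟩
      · intro g h j
        have h0 := hcF g h j
        simp only [hf']
        rw [E_mul]
        linear_combination h0
      · intro g
        simp only [hf', E_one]
        rw [hone1 g]; ring
      · intro g
        simp only [hf']
        rw [hone2 g]; ring
    have hphi' : f' (pb, pa) + f' (pb⁻¹, pb) + f' (pb * pa, pb⁻¹) + f' (pa⁻¹, pa) = 0 := by
      have h1 : f' (1, 1) = 0 := hNC.2.1 1
      have h2 : Phi f' = f' (pb, pa) + f' (pb⁻¹, pb) + f' (pb * pa, pb⁻¹) + f' (pa⁻¹, pa)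
          + 2 * f' (1, 1) := rfl
      rw [hPf', h1] at h2
      linarith
    obtain ⟨η, hη⟩ := exists_eta (F := ⟨f', hNC⟩) hphi'
    rw [Submodule.mem_comap, coboundaries₂, LinearMap.mem_range]
    refine ⟨fun g => η g + c, funext fun ⟨g, h⟩ => ?_⟩
    rw [d₁₂_hom_apply]
    rw [rep_apply]
    have key : E g * (η h + c) - (η (g * h) + c) + (η g + c) = FF (g, h) := by
      have h3 := hη g h
      simp only [hf'] at h3
      linear_combination h3
    exact key
  · intro Fc hFc
    have := Submodule.mem_comap.mp hFc
    rw [coboundaries₂, LinearMap.mem_range] at this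
    rcases this with ⟨x, hx⟩
    show Phi ((cocycles₂ (Rep.of zo)).subtype Fc) = 0
    rw [← hx]
    exact phi_dOne x

/-- `H²(pg, ℤ_o) ≅ ℤ`. -/
theorem stmt6 : Nonempty (groupCohomology (Rep.of zo) 2 ≃+ ℤ) := by
  let e1 : groupCohomology (Rep.of zo) 2 ≃+ (shortComplexH2 (Rep.of zo)).moduleCatLeftHomologyData.H :=
    (H2Iso (Rep.of zo)).toLinearEquiv.toAddEquiv
  have hB : LinearMap.range (shortComplexH2 (Rep.of zo)).moduleCatToCycles =
      (coboundaries₂ (Rep.of zo)).comap (LinearMap.ker (shortComplexH2 (Rep.of zo)).g.hom).subtype :=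
    LinearMap.range_codRestrict _ _ _
  let e2 : (shortComplexH2 (Rep.of zo)).moduleCatLeftHomologyData.H ≃ₗ[ℤ] ℤ :=
    (Submodule.quotEquivOfEq _ _ hB).trans ((Submodule.quotEquivOfEq _ _ ker_phi'.symm).trans
      (Phi'.quotKerEquivOfSurjective phi'_surjective))
  exact ⟨e1.trans e2.toAddEquiv⟩
end
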